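/- Let f be a multiplicative ℂ-linear map on m×m complex matrices with fⁿ = id. The equation X = A·f(X)·B + C has a solution if and only if the Stein equation 𝒳 = 𝒜·𝒳·ℬ + 𝒞 has a solution, where 𝒜 = A·f(A)⋯fⁿ⁻¹(A), ℬ = fⁿ⁻¹(B)⋯f(B)·B, and 𝒞 = Σ_{i=0}^{n-1} Gᵢ(C) with Gᵢ(X) = (A·f(A)⋯fⁱ⁻¹(A))·fⁱ(X)·(fⁱ⁻¹(B)⋯f(B)·B). -/
import Mathlib

open Finset

/-- Ordered product `A · f(A) · f²(A) ⋯ f^{i-1}(A)`. -/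
noncomputable def prodA {m : ℕ} (f : Matrix (Fin m) (Fin m) ℂ → Matrix (Fin m) (Fin m) ℂ)
    (A : Matrix (Fin m) (Fin m) ℂ) : ℕ → Matrix (Fin m) (Fin m) ℂ
  | 0 => 1
  | i + 1 => prodA f A i * f^[i] A

/-- Ordered product `f^{i-1}(B) ⋯ f(B) · B`. -/
noncomputable def prodB {m : ℕ} (f : Matrix (Fin m) (Fin m) ℂ → Matrix (Fin m) (Fin m) ℂ)
    (B : Matrix (Fin m) (Fin m) ℂ) : ℕ → Matrix (Fin m) (Fin m) ℂ
  | 0 => 1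
  | i + 1 => f^[i] B * prodB f B i

/-- `Gᵢ(X) = (A·f(A)⋯f^{i-1}(A)) · fⁱ(X) · (f^{i-1}(B)⋯f(B)·B)`. -/
noncomputable def G {m : ℕ} (f : Matrix (Fin m) (Fin m) ℂ → Matrix (Fin m) (Fin m) ℂ)
    (A B : Matrix (Fin m) (Fin m) ℂ) (i : ℕ) (X : Matrix (Fin m) (Fin m) ℂ) :
    Matrix (Fin m) (Fin m) ℂ :=
  prodA f A i * f^[i] X * prodB f B i

/-- The averaging operator `F(𝒳) = (1/n)·Σ_{i<n} (Gᵢ(𝒳) + (n−i−1)·Gᵢ(C))`. -/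
noncomputable def Fop {m : ℕ} (f : Matrix (Fin m) (Fin m) ℂ → Matrix (Fin m) (Fin m) ℂ)
    (A B C : Matrix (Fin m) (Fin m) ℂ) (n : ℕ) (𝒳 : Matrix (Fin m) (Fin m) ℂ) :
    Matrix (Fin m) (Fin m) ℂ :=
  ((n : ℂ)⁻¹) • ∑ i ∈ range n, (G f A B i 𝒳 + ((n - i - 1 : ℕ) : ℂ) • G f A B i C)

section Aux

variable {m : ℕ} {f : Matrix (Fin m) (Fin m) ℂ → Matrix (Fin m) (Fin m) ℂ}
variable {A B C : Matrix (Fin m) (Fin m) ℂ}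

private lemma iter_mul (hmul : ∀ X Y, f (X * Y) = f X * f Y) (k : ℕ)
    (X Y : Matrix (Fin m) (Fin m) ℂ) : f^[k] (X * Y) = f^[k] X * f^[k] Y := by
  induction k with
  | zero => simp
  | succ k ih => simp [Function.iterate_succ_apply', ih, hmul]

private lemma iter_add (hlin : IsLinearMap ℂ f) (k : ℕ)
    (X Y : Matrix (Fin m) (Fin m) ℂ) : f^[k] (X + Y) = f^[k] X + f^[k] Y := by
  induction k with
  | zero => simp
  | succ k ih => simp [Function.iterate_succ_apply', ih, hlin.map_add]

private lemma iter_smul (hlin : IsLinearMap ℂ f) (k : ℕ) (c : ℂ)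
    (X : Matrix (Fin m) (Fin m) ℂ) : f^[k] (c • X) = c • f^[k] X := by
  induction k with
  | zero => simp
  | succ k ih => simp [Function.iterate_succ_apply', ih, hlin.map_smul]

/-- `Gₖ(A·f(X)·B) = Gₖ₊₁(X)`. -/
private lemma G_step (hmul : ∀ X Y, f (X * Y) = f X * f Y) (k : ℕ)
    (X : Matrix (Fin m) (Fin m) ℂ) :
    G f A B k (A * f X * B) = G f A B (k + 1) X := by
  simp only [G, iter_mul hmul, prodA, prodB, Function.iterate_succ_apply]
  noncomm_ring

/-- `Gₖ` is additive. -/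
private lemma G_add (hlin : IsLinearMap ℂ f) (k : ℕ)
    (X Y : Matrix (Fin m) (Fin m) ℂ) :
    G f A B k (X + Y) = G f A B k X + G f A B k Y := by
  simp [G, iter_add hlin, Matrix.mul_add, Matrix.add_mul]

/-- `f 1 = 1` for a periodic multiplicative map. -/
private lemma f_one {n : ℕ} (hn : 0 < n) (hmul : ∀ X Y, f (X * Y) = f X * f Y)
    (hper : f^[n] = id) : f 1 = 1 := by
  obtain ⟨k, rfl⟩ : ∃ k, n = k + 1 := ⟨n - 1, (Nat.succ_pred_eq_of_pos hn).symm⟩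
  have h1 : f (f^[k] 1) = 1 := by
    have := congrFun hper (1 : Matrix (Fin m) (Fin m) ℂ)
    rwa [Function.iterate_succ_apply'] at this
  calc f 1 = f 1 * 1 := (mul_one _).symm
    _ = f 1 * f (f^[k] 1) := by rw [h1]
    _ = f (1 * f^[k] 1) := (hmul _ _).symm
    _ = f (f^[k] 1) := by rw [one_mul]
    _ = 1 := h1

/-- `A · f(prodA i) = prodA (i+1)`. -/
private lemma prodA_succ' {n : ℕ} (hn : 0 < n) (hmul : ∀ X Y, f (X * Y) = f X * f Y)
    (hper : f^[n] = id) (i : ℕ) :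
    A * f (prodA f A i) = prodA f A (i + 1) := by
  induction i with
  | zero => simp [prodA, f_one hn hmul hper]
  | succ i ih =>
    show A * f (prodA f A i * f^[i] A) = prodA f A (i + 1) * f^[i + 1] A
    rw [hmul, ← Matrix.mul_assoc, ih, Function.iterate_succ_apply']

/-- `f(prodB i) · B = prodB (i+1)`. -/
private lemma prodB_succ' {n : ℕ} (hn : 0 < n) (hmul : ∀ X Y, f (X * Y) = f X * f Y)
    (hper : f^[n] = id) (i : ℕ) :
    f (prodB f B i) * B = prodB f B (i + 1) := by
  induction i with
  | zero => simp [prodB, f_one hn hmul hper]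
  | succ i ih =>
    show f (f^[i] B * prodB f B i) * B = f^[i + 1] B * prodB f B (i + 1)
    rw [hmul, Matrix.mul_assoc, ih, Function.iterate_succ_apply']

/-- `A · f(Gᵢ(Y)) · B = Gᵢ₊₁(Y)`. -/
private lemma G_shift {n : ℕ} (hn : 0 < n) (hmul : ∀ X Y, f (X * Y) = f X * f Y)
    (hper : f^[n] = id) (i : ℕ) (Y : Matrix (Fin m) (Fin m) ℂ) :
    A * f (G f A B i Y) * B = G f A B (i + 1) Y := by
  simp only [G, hmul]
  calc A * (f (prodA f A i) * f (f^[i] Y) * f (prodB f B i)) * B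
      = (A * f (prodA f A i)) * f (f^[i] Y) * (f (prodB f B i) * B) := by noncomm_ring
    _ = prodA f A (i + 1) * f^[i + 1] Y * prodB f B (i + 1) := by
        rw [prodA_succ' hn hmul hper, prodB_succ' hn hmul hper,
          Function.iterate_succ_apply' f i Y]

end Aux

theorem stmt_9 {m n : ℕ} (hn : 0 < n)
    (f : Matrix (Fin m) (Fin m) ℂ → Matrix (Fin m) (Fin m) ℂ)
    (hlin : IsLinearMap ℂ f) (hmul : ∀ X Y, f (X * Y) = f X * f Y)
    (hper : f^[n] = id)
    (A B C : Matrix (Fin m) (Fin m) ℂ) :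
    (∃ X : Matrix (Fin m) (Fin m) ℂ, X = A * f X * B + C) ↔
      (∃ 𝒳 : Matrix (Fin m) (Fin m) ℂ,
        𝒳 = prodA f A n * 𝒳 * prodB f B n + ∑ i ∈ range n, G f A B i C) := by
  have hGn : ∀ Y : Matrix (Fin m) (Fin m) ℂ,
      G f A B n Y = prodA f A n * Y * prodB f B n := by
    intro Y; simp [G, hper]
  constructor
  · rintro ⟨X, hX⟩
    refine ⟨X, ?_⟩
    have main : ∀ k, X = G f A B k X + ∑ i ∈ range k, G f A B i C := by
      intro k
      induction k with
      | zero => simp [G, prodA, prodB]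
      | succ k ih =>
        rw [sum_range_succ]
        calc X = G f A B k X + ∑ i ∈ range k, G f A B i C := ih
          _ = G f A B k (A * f X * B + C) + ∑ i ∈ range k, G f A B i C := by rw [← hX]
          _ = (G f A B (k + 1) X + G f A B k C) + ∑ i ∈ range k, G f A B i C := by
              rw [G_add hlin, G_step hmul]
          _ = G f A B (k + 1) X + (∑ i ∈ range k, G f A B i C + G f A B k C) := by abel
    rw [← hGn X]
    exact main n
  · rintro ⟨𝒳, h𝒳⟩
    have hn' : (n : ℂ) ≠ 0 := Nat.cast_ne_zero.2 hn.ne'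
    set g : ℕ → Matrix (Fin m) (Fin m) ℂ :=
      fun j => G f A B j 𝒳 + ((n - j : ℕ) : ℂ) • G f A B j C with hg
    set S : Matrix (Fin m) (Fin m) ℂ :=
      ∑ i ∈ range n, (G f A B i 𝒳 + ((n - i - 1 : ℕ) : ℂ) • G f A B i C) with hSdef
    refine ⟨(n : ℂ)⁻¹ • S, ?_⟩
    have hfS : f S = ∑ i ∈ range n,
        (f (G f A B i 𝒳) + ((n - i - 1 : ℕ) : ℂ) • f (G f A B i C)) := by
      set F : Matrix (Fin m) (Fin m) ℂ →ₗ[ℂ] Matrix (Fin m) (Fin m) ℂ :=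
        IsLinearMap.mk' f hlin with hF
      have hFf : ∀ Z, f Z = F Z := fun Z => rfl
      rw [hFf, hSdef, map_sum]
      refine Finset.sum_congr rfl fun i _ => ?_
      rw [map_add, map_smul]
      rfl
    -- key summation identity
    have e2 : A * f S * B = S - (n : ℂ) • C := by
      rw [hfS, Finset.mul_sum, Finset.sum_mul]
      have hterm : ∀ i ∈ range n,
          A * (f (G f A B i 𝒳) + ((n - i - 1 : ℕ) : ℂ) • f (G f A B i C)) * B
            = g (i + 1) := by
        intro i _
        rw [hg]
        simp only [Matrix.mul_add, Matrix.add_mul, Matrix.mul_smul, Matrix.smul_mul]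
        rw [G_shift hn hmul hper, G_shift hn hmul hper, Nat.sub_sub]
      rw [Finset.sum_congr rfl hterm]
      have hshift : ∑ i ∈ range n, g (i + 1) = (∑ i ∈ range n, g i) + g n - g 0 := by
        have h1 := Finset.sum_range_succ' g n
        have h2 := Finset.sum_range_succ g n
        rw [h2] at h1
        rw [eq_sub_iff_add_eq]
        exact h1.symm
      rw [hshift]
      have hgn : g n = 𝒳 - ∑ i ∈ range n, G f A B i C := by
        rw [hg]
        simp only [Nat.sub_self, Nat.cast_zero, zero_smul, add_zero]
        rw [hGn, eq_sub_of_add_eq h𝒳.symm]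
      have hg0 : g 0 = 𝒳 + (n : ℂ) • C := by
        simp [hg, G, prodA, prodB]
      have hsum : ∑ i ∈ range n, g i = S + ∑ i ∈ range n, G f A B i C := by
        rw [hSdef, ← Finset.sum_add_distrib]
        refine Finset.sum_congr rfl fun i hi => ?_
        have hi' := Finset.mem_range.mp hi
        have hsub : n - i = (n - i - 1) + 1 := by omega
        have hc : ((n - i : ℕ) : ℂ) = ((n - i - 1 : ℕ) : ℂ) + 1 := by
          rw [hsub]; push_cast; ring
        show G f A B i 𝒳 + ((n - i : ℕ) : ℂ) • G f A B i C = _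
        rw [hc, add_smul, one_smul]
        abel
      rw [hsum, hgn, hg0]
      abel
    calc (n : ℂ)⁻¹ • S
        = (n : ℂ)⁻¹ • (S - (n : ℂ) • C) + C := by
          rw [smul_sub, inv_smul_smul₀ hn']; abel
      _ = (n : ℂ)⁻¹ • (A * f S * B) + C := by rw [e2]
      _ = A * f ((n : ℂ)⁻¹ • S) * B + C := by
          rw [hlin.map_smul, Matrix.mul_smul, Matrix.smul_mul]
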